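/- For all real λ > 0 and d > 0, the double integral (2/π) · ∫_{θ=0}^{π/2} ∫_{ψ=0}^{∞} e^{−2λπ d ψ cos θ} · 2λπψ · e^{−λπψ²} dψ dθ equals e^{λπd²} · (2/√π) · ∫_{√(λπ)·d}^{∞} e^{−u²} du. (This is the closed-form expression e^{λπd²}·erfc(√(λπ)·d) for the probability of the sufficient mid-point optimality condition in a homogeneous Poisson network of intensity λ.) -/

import Mathlib

open Real MeasureTheory

lemma setIntegral_Ioi_comp_add_right (f : ℝ → ℝ) (c t : ℝ) :
    ∫ x in Set.Ioi c, f (x + t) = ∫ x in Set.Ioi (c + t), f x := by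
  rw [← integral_indicator measurableSet_Ioi, ← integral_indicator measurableSet_Ioi,
    ← integral_add_right_eq_self (fun x => Set.indicator (Set.Ioi (c + t)) f x) t]
  congr 1
  ext x
  by_cases h : c < x
  · rw [Set.indicator_of_mem (by simpa using h),
      Set.indicator_of_mem (by simp [Set.mem_Ioi]; linarith)]
  · rw [Set.indicator_of_notMem (by simpa using h),
      Set.indicator_of_notMem (by simp [Set.mem_Ioi]; linarith)]

/-- Closed form for the probability of the sufficient mid-point optimality condition:
for `λ > 0` and `d > 0`,
`(2/π) ∫₀^{π/2} ∫₀^∞ e^{−2λπdψ cos θ} · 2λπψ e^{−λπψ²} dψ dθ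
  = e^{λπd²} · (2/√π) ∫_{√(λπ)d}^∞ e^{−u²} du`,
i.e. `P(E_suff) = e^{λπd²} erfc(√(λπ) d)`. -/
theorem suff_condition_probability (lam d : ℝ) (hlam : 0 < lam) (hd : 0 < d) :
    (2 / π) * ∫ θ in (0:ℝ)..(π / 2),
        ∫ ψ in Set.Ioi (0:ℝ),
          Real.exp (-(2 * lam * π * d * ψ * Real.cos θ)) *
            (2 * lam * π * ψ * Real.exp (-(lam * π * ψ ^ 2)))
      = Real.exp (lam * π * d ^ 2) *
          ((2 / Real.sqrt π) *
            ∫ u in Set.Ioi (Real.sqrt (lam * π) * d), Real.exp (-u ^ 2)) := by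
  have hπ : (0:ℝ) < π := Real.pi_pos
  set a : ℝ := lam * π with ha
  have ha0 : 0 < a := mul_pos hlam hπ
  have hsa : (0:ℝ) < Real.sqrt a := Real.sqrt_pos.mpr ha0
  -- the function on the plane, supported on the open first quadrant
  set S : Set (ℝ × ℝ) := Set.Ioi (0:ℝ) ×ˢ Set.Ioi (0:ℝ) with hS
  set T : Set (ℝ × ℝ) := Set.Ioi (0:ℝ) ×ˢ Set.Ioo (0:ℝ) (π/2) with hT
  set h : ℝ × ℝ → ℝ := fun q => Real.exp (-(2*a*d*q.1)) * Real.exp (-(a*(q.1^2 + q.2^2)))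
    with hh
  set g : ℝ × ℝ → ℝ := S.indicator h with hg
  -- polar integrand, variables (r, θ)
  set F : ℝ × ℝ → ℝ := fun p =>
    p.1 * (Real.exp (-(2*a*d*p.1*Real.cos p.2)) * Real.exp (-(a*p.1^2))) with hF
  have hTsub : T ⊆ polarCoord.target := by
    rw [polarCoord_target]
    intro p hp
    exact ⟨hp.1, ⟨by have := hp.2.1; linarith,
      by have := hp.2.2; linarith⟩⟩
  -- pointwise identification on the polar target
  have hpt : ∀ p ∈ polarCoord.target, p.1 • g (polarCoord.symm p) = T.indicator F p := by
    rintro ⟨r, θ⟩ hp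
    rw [polarCoord_target] at hp
    obtain ⟨hr, hθ⟩ := hp
    simp only [Set.mem_Ioi] at hr
    simp only [Set.mem_Ioo] at hθ
    have hsymm : polarCoord.symm (r, θ) = (r * Real.cos θ, r * Real.sin θ) := rfl
    by_cases hθ' : θ ∈ Set.Ioo (0:ℝ) (π/2)
    · obtain ⟨h1, h2⟩ := hθ'
      have hc : 0 < Real.cos θ := Real.cos_pos_of_mem_Ioo ⟨by linarith, h2⟩
      have hs : 0 < Real.sin θ := Real.sin_pos_of_pos_of_lt_pi h1 (by linarith)
      have hmemS : polarCoord.symm (r, θ) ∈ S := by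
        rw [hsymm]
        exact ⟨mul_pos hr hc, mul_pos hr hs⟩
      have hmemT : ((r, θ) : ℝ × ℝ) ∈ T := ⟨hr, h1, h2⟩
      rw [hg, Set.indicator_of_mem hmemS, Set.indicator_of_mem hmemT, hsymm, hh, hF]
      have hsq : (r * Real.cos θ)^2 + (r * Real.sin θ)^2 = r^2 := by
        have := Real.sin_sq_add_cos_sq θ
        nlinarith [this]
      simp only [smul_eq_mul]
      rw [hsq]
      ring_nf
    · have hmemT : ((r, θ) : ℝ × ℝ) ∉ T := by
        intro hmem
        exact hθ' hmem.2
      have hmemS : polarCoord.symm (r, θ) ∉ S := by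
        rw [hsymm]
        rintro ⟨hx, hy⟩
        simp only [Set.mem_Ioi] at hx hy
        have hc : 0 < Real.cos θ := by nlinarith
        have hs : 0 < Real.sin θ := by nlinarith
        apply hθ'
        constructor
        · by_contra hle
          push_neg at hle
          exact absurd (Real.sin_nonpos_of_nonpos_of_neg_pi_le hle hθ.1.le) (not_le.mpr hs)
        · by_contra hle
          push_neg at hle
          exact absurd (Real.cos_nonpos_of_pi_div_two_le_of_le hle (by linarith)) (not_le.mpr hc)
      rw [hg, Set.indicator_of_notMem hmemS, Set.indicator_of_notMem hmemT, smul_zero]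
  have hTmeas : MeasurableSet T := measurableSet_Ioi.prod measurableSet_Ioo
  -- change of variables to the plane
  have hpolar : ∫ p in T, F p = ∫ p, g p := by
    rw [← integral_comp_polarCoord_symm g,
      setIntegral_congr_fun polarCoord.open_target.measurableSet hpt,
      setIntegral_indicator hTmeas, Set.inter_eq_right.mpr hTsub]
  -- integrability of F on T
  have hFcont : Continuous F := by fun_prop
  have hFint : Integrable F ((volume.restrict (Set.Ioi (0:ℝ))).prod
      (volume.restrict (Set.Ioo (0:ℝ) (π/2)))) := by
    rw [Measure.prod_restrict]
    have hG : IntegrableOn (fun p : ℝ × ℝ => p.1 * Real.exp (-(a*p.1^2))) T := by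
      rw [hT, IntegrableOn, Measure.volume_eq_prod, ← Measure.prod_restrict]
      have h1 : Integrable (fun x : ℝ => x * Real.exp (-(a*x^2)))
          (volume.restrict (Set.Ioi (0:ℝ))) := by
        have := (integrable_mul_exp_neg_mul_sq ha0).restrict (s := Set.Ioi (0:ℝ))
        simpa [neg_mul] using this
      have h2 : Integrable (fun _ : ℝ => (1:ℝ)) (volume.restrict (Set.Ioo (0:ℝ) (π/2))) :=
        integrable_const _
      simpa using h1.mul_prod h2
    apply hG.mono' hFcont.aestronglyMeasurable
    filter_upwards [ae_restrict_mem hTmeas] with p hp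
    obtain ⟨hp1, hp2⟩ := hp
    simp only [Set.mem_Ioi] at hp1
    simp only [Set.mem_Ioo] at hp2
    have hc : 0 ≤ Real.cos p.2 := Real.cos_nonneg_of_mem_Icc ⟨by linarith [hp2.1], hp2.2.le⟩
    have hb : Real.exp (-(2*a*d*p.1*Real.cos p.2)) ≤ 1 := by
      apply Real.exp_le_one_iff.mpr
      have : 0 ≤ 2*a*d*p.1*Real.cos p.2 := by positivity
      linarith
    show |p.1 * (Real.exp (-(2*a*d*p.1*Real.cos p.2)) * Real.exp (-(a*p.1^2)))|
      ≤ p.1 * Real.exp (-(a*p.1^2))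
    rw [abs_of_nonneg (by positivity)]
    calc p.1 * (Real.exp (-(2*a*d*p.1*Real.cos p.2)) * Real.exp (-(a*p.1^2)))
        ≤ p.1 * (1 * Real.exp (-(a*p.1^2))) := by
          apply mul_le_mul_of_nonneg_left _ hp1.le
          exact mul_le_mul_of_nonneg_right hb (Real.exp_pos _).le
      _ = p.1 * Real.exp (-(a*p.1^2)) := by ring
  -- iterate the integral over T
  have hiter : ∫ p in T, F p
      = ∫ θ in Set.Ioo (0:ℝ) (π/2), ∫ ψ in Set.Ioi (0:ℝ), F (ψ, θ) := by
    rw [hT, Measure.volume_eq_prod, ← Measure.prod_restrict]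
    exact integral_prod_symm F hFint
  -- evaluate the plane integral
  have hI1 : ∫ x in Set.Ioi (0:ℝ), Real.exp (-(2*a*d*x)) * Real.exp (-(a*x^2))
      = Real.exp (a*d^2) * ((Real.sqrt a)⁻¹ *
        ∫ u in Set.Ioi (Real.sqrt a * d), Real.exp (-u^2)) := by
    have step1 : ∀ x : ℝ, Real.exp (-(2*a*d*x)) * Real.exp (-(a*x^2))
        = Real.exp (a*d^2) * Real.exp (-(a*(x+d)^2)) := by
      intro x
      rw [← Real.exp_add, ← Real.exp_add]
      ring_nf
    rw [setIntegral_congr_fun measurableSet_Ioi (fun x _ => step1 x),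
      integral_const_mul]
    congr 1
    have step2 : ∫ x in Set.Ioi (0:ℝ), Real.exp (-(a*(x+d)^2))
        = ∫ x in Set.Ioi (0+d), Real.exp (-(a*x^2)) :=
      setIntegral_Ioi_comp_add_right (fun t => Real.exp (-(a*t^2))) 0 d
    rw [step2, zero_add]
    have step3 : ∀ x : ℝ, Real.exp (-(a*x^2)) = Real.exp (-(Real.sqrt a * x)^2) := by
      intro x
      congr 1
      rw [mul_pow, Real.sq_sqrt ha0.le]
    rw [setIntegral_congr_fun measurableSet_Ioi (fun x _ => step3 x)]
    have := integral_comp_mul_left_Ioi (fun u => Real.exp (-u^2)) d hsa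
    simpa [smul_eq_mul] using this
  have hI2 : ∫ y in Set.Ioi (0:ℝ), Real.exp (-(a*y^2)) = Real.sqrt (π/a) / 2 := by
    simpa [neg_mul] using integral_gaussian_Ioi a
  have hplane : ∫ p, g p
      = Real.exp (a*d^2) * ((Real.sqrt a)⁻¹ *
          ∫ u in Set.Ioi (Real.sqrt a * d), Real.exp (-u^2)) * (Real.sqrt (π/a) / 2) := by
    rw [hg, integral_indicator (measurableSet_Ioi.prod measurableSet_Ioi), hh]
    rw [Measure.volume_eq_prod]
    have : ∀ q : ℝ × ℝ, Real.exp (-(2*a*d*q.1)) * Real.exp (-(a*(q.1^2 + q.2^2)))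
        = (Real.exp (-(2*a*d*q.1)) * Real.exp (-(a*q.1^2))) * Real.exp (-(a*q.2^2)) := by
      intro q
      rw [← Real.exp_add, ← Real.exp_add, ← Real.exp_add]
      ring_nf
    rw [setIntegral_congr_fun (measurableSet_Ioi.prod measurableSet_Ioi)
      (fun q _ => this q)]
    rw [setIntegral_prod_mul (fun x => Real.exp (-(2*a*d*x)) * Real.exp (-(a*x^2)))
      (fun y => Real.exp (-(a*y^2))) _ _, hI1, hI2]
  -- rewrite the LHS iterated integral
  have hinner : ∀ θ : ℝ, (∫ ψ in Set.Ioi (0:ℝ),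
      Real.exp (-(2 * lam * π * d * ψ * Real.cos θ)) *
        (2 * lam * π * ψ * Real.exp (-(lam * π * ψ ^ 2))))
      = (2*a) * ∫ ψ in Set.Ioi (0:ℝ), F (ψ, θ) := by
    intro θ
    rw [← integral_const_mul]
    congr 1
    ext ψ
    rw [hF]
    simp only [ha]
    ring_nf
  have hLHS : (∫ θ in (0:ℝ)..(π / 2), ∫ ψ in Set.Ioi (0:ℝ),
        Real.exp (-(2 * lam * π * d * ψ * Real.cos θ)) *
          (2 * lam * π * ψ * Real.exp (-(lam * π * ψ ^ 2))))
      = (2*a) * ∫ p in T, F p := by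
    rw [intervalIntegral.integral_of_le (by positivity), integral_Ioc_eq_integral_Ioo,
      hiter]
    rw [setIntegral_congr_fun measurableSet_Ioo (fun θ _ => hinner θ), integral_const_mul]
  rw [hLHS, hpolar, hplane]
  -- final scalar computation
  have hsp : Real.sqrt π * Real.sqrt π = π := Real.mul_self_sqrt hπ.le
  have hsa2 : Real.sqrt a * Real.sqrt a = a := Real.mul_self_sqrt ha0.le
  rw [Real.sqrt_div hπ.le]
  have hπne : (π:ℝ) ≠ 0 := hπ.ne'
  have hsane : Real.sqrt a ≠ 0 := hsa.ne'
  have hspne : Real.sqrt π ≠ 0 := (Real.sqrt_pos.mpr hπ).ne'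
  field_simp
  ring_nf
  rw [Real.sq_sqrt (mul_pos hlam hπ).le]
  linear_combination (lam * π *
    (∫ u in Set.Ioi (d * Real.sqrt (lam*π)), Real.exp (-u^2))) * hsp
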